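/- Let {ψ_j}_{j∈ℕ} be a frame for a closed subspace S of H with frame bounds c₁, c₂ > 0, and let T be a closed subspace with cos(θ_{T,S}) > 0. Define P f = Σ_j ⟨f, ψ_j⟩ ψ_j. Then for all φ ∈ T, c₁ cos²(θ_{T,S}) ‖φ‖² ≤ ⟨P φ, φ⟩ ≤ c₂ ‖φ‖². -/

import Mathlib

open Submodule

variable {H : Type*}

/-- The cosine of the subspace angle `θ_{U,W}` between subspaces `U` and `W`:
`cos θ_{U,W} = inf_{u ∈ U, ‖u‖ = 1} ‖Q_W u‖`. -/
noncomputable def cosAngle [NormedAddCommGroup H] [InnerProductSpace ℂ H]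
    (U W : Submodule ℂ H) [HasOrthogonalProjection W] : ℝ :=
  sInf {r : ℝ | ∃ u ∈ U, ‖u‖ = 1 ∧ r = ‖(orthogonalProjection W u : H)‖}

open scoped InnerProductSpace

/-- if `{ψ_j}` is a frame for the closed subspace `S` with bounds `c₁, c₂`,
`T` is a closed subspace with `cos θ_{T,S} > 0`, and `P f = Σ_j ⟨f,ψ_j⟩ψ_j`, then
`c₁ cos² θ_{T,S} ‖φ‖² ≤ ⟨Pφ, φ⟩ ≤ c₂ ‖φ‖²` for all `φ ∈ T`. -/
theorem stmt5 [NormedAddCommGroup H] [InnerProductSpace ℂ H] [CompleteSpace H]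
    [TopologicalSpace.SeparableSpace H]
    (S T : Submodule ℂ H) (hS : IsClosed (S : Set H)) (hT : IsClosed (T : Set H))
    [HasOrthogonalProjection S]
    (ψ : ℕ → H) (hmem : ∀ j, ψ j ∈ S)
    (c₁ c₂ : ℝ) (hc₁ : 0 < c₁) (hc₂ : 0 < c₂)
    (hframe : ∀ f ∈ S, c₁ * ‖f‖ ^ 2 ≤ ∑' j, ‖⟪ψ j, f⟫_ℂ‖ ^ 2 ∧
      ∑' j, ‖⟪ψ j, f⟫_ℂ‖ ^ 2 ≤ c₂ * ‖f‖ ^ 2)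
    (hangle : 0 < cosAngle T S)
    (P : H →L[ℂ] H)
    (hsum : ∀ f : H, Summable fun j => ⟪ψ j, f⟫_ℂ • ψ j)
    (hP : ∀ f : H, P f = ∑' j, ⟪ψ j, f⟫_ℂ • ψ j) :
    ∀ φ ∈ T, c₁ * cosAngle T S ^ 2 * ‖φ‖ ^ 2 ≤ (⟪P φ, φ⟫_ℂ).re ∧
      (⟪P φ, φ⟫_ℂ).re ≤ c₂ * ‖φ‖ ^ 2 := by
  intro φ hφ
  set Q : H := (orthogonalProjection S φ : H) with hQdef
  have hQmem : Q ∈ S := (orthogonalProjection S φ).2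
  -- inner with ψ j sees only the projection
  have hinner : ∀ j, ⟪ψ j, φ⟫_ℂ = ⟪ψ j, Q⟫_ℂ := by
    intro j
    have h1 : φ - Q ∈ Sᗮ := Submodule.sub_starProjection_mem_orthogonal (K := S) φ
    have h2 : ⟪ψ j, φ - Q⟫_ℂ = 0 :=
      (Submodule.mem_orthogonal S (φ - Q)).1 h1 (ψ j) (hmem j)
    rw [inner_sub_right] at h2
    linear_combination h2
  -- the complex sum
  have hsummable := hsum φ
  have hterm : ∀ j, ⟪φ, ⟪ψ j, φ⟫_ℂ • ψ j⟫_ℂ = ((‖⟪ψ j, φ⟫_ℂ‖ ^ 2 : ℝ) : ℂ) := by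
    intro j
    have h : ⟪φ, ψ j⟫_ℂ = (starRingEnd ℂ) ⟪ψ j, φ⟫_ℂ := (inner_conj_symm _ _).symm
    rw [inner_smul_right, h, Complex.mul_conj']
    push_cast
    ring
  have hPinner : ⟪φ, P φ⟫_ℂ = ∑' j, ((‖⟪ψ j, φ⟫_ℂ‖ ^ 2 : ℝ) : ℂ) := by
    rw [hP]
    have h := ContinuousLinearMap.map_tsum (innerSL ℂ φ) hsummable
    simpa only [innerSL_apply_apply, hterm, Function.comp_def] using h
  have hsumC : Summable fun j => ((‖⟪ψ j, φ⟫_ℂ‖ ^ 2 : ℝ) : ℂ) := by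
    have := (hsummable.map (innerSL ℂ φ) (innerSL ℂ φ).continuous)
    simpa only [Function.comp_def, innerSL_apply_apply, hterm] using this
  have hsumR : Summable fun j => ‖⟪ψ j, φ⟫_ℂ‖ ^ 2 := by
    rwa [Complex.summable_ofReal] at hsumC
  have hre : (⟪P φ, φ⟫_ℂ).re = ∑' j, ‖⟪ψ j, φ⟫_ℂ‖ ^ 2 := by
    rw [← inner_conj_symm, Complex.conj_re, hPinner, Complex.re_tsum hsumC]
    simp only [Complex.ofReal_re]
  -- rewrite in terms of Q
  have hreQ : (⟪P φ, φ⟫_ℂ).re = ∑' j, ‖⟪ψ j, Q⟫_ℂ‖ ^ 2 := by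
    rw [hre]
    congr 1
    ext j
    rw [hinner j]
  have hframeQ := hframe Q hQmem
  have hQnorm : ‖Q‖ ≤ ‖φ‖ := by
    calc ‖Q‖ = ‖orthogonalProjection S φ‖ := rfl
      _ ≤ ‖orthogonalProjection S‖ * ‖φ‖ := (orthogonalProjection S).le_opNorm φ
      _ ≤ 1 * ‖φ‖ :=
          mul_le_mul_of_nonneg_right (orthogonalProjection_norm_le S) (norm_nonneg φ)
      _ = ‖φ‖ := one_mul _
  constructor
  · -- lower bound
    have hcos : cosAngle T S * ‖φ‖ ≤ ‖Q‖ := by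
      rcases eq_or_ne φ 0 with h0 | h0
      · simp [h0, hQdef, le_of_lt hangle]
      · have hn : (0 : ℝ) < ‖φ‖ := norm_pos_iff.2 h0
        have hmemset : ‖φ‖⁻¹ * ‖Q‖ ∈
            {r : ℝ | ∃ u ∈ T, ‖u‖ = 1 ∧ r = ‖(orthogonalProjection S u : H)‖} := by
          refine ⟨(‖φ‖⁻¹ : ℂ) • φ, T.smul_mem _ hφ, ?_, ?_⟩
          · rw [norm_smul]
            simp [hn.ne', abs_of_pos hn]
          · rw [map_smul]
            push_cast
            rw [norm_smul]
            simp [abs_of_pos hn, hQdef]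
        have hbdd : BddBelow {r : ℝ | ∃ u ∈ T, ‖u‖ = 1 ∧ r = ‖(orthogonalProjection S u : H)‖} := by
          refine ⟨0, fun r hr => ?_⟩
          obtain ⟨u, -, -, hru⟩ := hr
          rw [hru]; positivity
        have hle : cosAngle T S ≤ ‖φ‖⁻¹ * ‖Q‖ := csInf_le hbdd hmemset
        calc cosAngle T S * ‖φ‖ ≤ (‖φ‖⁻¹ * ‖Q‖) * ‖φ‖ := by
              exact mul_le_mul_of_nonneg_right hle hn.le
          _ = ‖Q‖ := by field_simp
    have hcos2 : cosAngle T S ^ 2 * ‖φ‖ ^ 2 ≤ ‖Q‖ ^ 2 := by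
      have := mul_le_mul hcos hcos (by positivity) (norm_nonneg _)
      nlinarith [hcos, norm_nonneg Q, norm_nonneg φ, hangle.le]
    rw [hreQ]
    calc c₁ * cosAngle T S ^ 2 * ‖φ‖ ^ 2 = c₁ * (cosAngle T S ^ 2 * ‖φ‖ ^ 2) := by ring
      _ ≤ c₁ * ‖Q‖ ^ 2 := by exact mul_le_mul_of_nonneg_left hcos2 hc₁.le
      _ ≤ ∑' j, ‖⟪ψ j, Q⟫_ℂ‖ ^ 2 := hframeQ.1
  · -- upper bound
    rw [hreQ]
    calc (∑' j, ‖⟪ψ j, Q⟫_ℂ‖ ^ 2) ≤ c₂ * ‖Q‖ ^ 2 := hframeQ.2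
      _ ≤ c₂ * ‖φ‖ ^ 2 := by
        apply mul_le_mul_of_nonneg_left _ hc₂.le
        exact pow_le_pow_left₀ (norm_nonneg _) hQnorm 2
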